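/- Every cyclic [n,k] code C admits n automorphisms π_1,...,π_n (the n cyclic shifts) such that for every coordinate j, {π_1(j),...,π_n(j)} = {1,...,n}; hence every cyclic code admits an MDS-PIR capacity-achieving matrix Λ_{κ,ν} with κ/ν = k/n. -/

import Mathlib

/-- `I` is an information set of the `[n,k]` code `C`: it has size `k` and a codeword
vanishing on `I` is zero (so the projection of `C` onto the coordinates in `I` is a
bijection onto `F^I`). -/
def IsInfoSet {F : Type*} [Field F] {n : ℕ} (C : Submodule F (Fin n → F)) (k : ℕ)
    (I : Finset (Fin n)) : Prop :=
  I.card = k ∧ ∀ x ∈ C, (∀ j ∈ I, x j = 0) → x = 0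

/-- `Λ` is a PIR achievable rate matrix for the `[n,k]` code `C`: every column has
Hamming weight `κ` and the support of every row contains an information set. -/
def IsPIRMatrix {F : Type*} [Field F] {n ν : ℕ} (C : Submodule F (Fin n → F))
    (k κ : ℕ) (Λ : Fin ν → Fin n → Bool) : Prop :=
  (∀ j, (Finset.univ.filter fun u => Λ u j = true).card = κ) ∧
  ∀ u, ∃ I : Finset (Fin n), (∀ j ∈ I, Λ u j = true) ∧ IsInfoSet C k I

/-- The `s`-th generalized Hamming weight of the code `C`: the smallest support size of
an `s`-dimensional subcode of `C`. -/
noncomputable def genHammingWeight {F : Type*} [Field F] {n : ℕ}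
    (C : Submodule F (Fin n → F)) (s : ℕ) : ℕ :=
  sInf {c | ∃ D : Submodule F (Fin n → F), D ≤ C ∧ Module.finrank F D = s ∧
    c = Set.ncard {j | ∃ x ∈ D, x j ≠ 0}}

/-- Every `[n,k]` code has an information set. -/
lemma exists_infoSet_aux {F : Type*} [Field F] {n k : ℕ} [NeZero n]
    (C : Submodule F (Fin n → F)) (hk : Module.finrank F C = k) :
    ∃ I : Finset (Fin n), IsInfoSet C k I := by
  classical
  set f : Fin n → (C →ₗ[F] F) := fun j => (LinearMap.proj j).comp C.subtype with hfdef
  have hspan : Submodule.span F (Set.range f) = ⊤ := by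
    rw [Submodule.eq_top_iff']
    intro g
    apply FiniteDimensional.mem_span_of_iInf_ker_le_ker (K := g)
    intro v hv
    have hall : ∀ j, f j v = 0 := by
      intro j
      have := Submodule.mem_iInf (fun j => LinearMap.ker (f j)) |>.mp hv j
      simpa using this
    have hv0 : v = 0 := by
      apply Subtype.ext
      funext j
      exact hall j
    simp [hv0]
  obtain ⟨t, hts, htspan, htli⟩ := exists_linearIndependent F (Set.range f)
  have htspan' : Submodule.span F t = ⊤ := htspan.trans hspan
  have htfin : t.Finite := htli.setFinite
  haveI : Fintype t := htfin.fintype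
  -- card of t is k
  have hcard : t.toFinset.card = k := by
    have h1 : Module.finrank F (Submodule.span F t) = t.toFinset.card :=
      finrank_span_set_eq_card htli
    rw [htspan'] at h1
    rw [← h1, finrank_top]
    rw [show Module.finrank F (C →ₗ[F] F) = Module.finrank F (Module.Dual F C) from rfl,
      Subspace.dual_finrank_eq, hk]
  -- choice of a coordinate for each functional in t
  have hchoice : ∀ g ∈ t, ∃ j : Fin n, f j = g := fun g hg => hts hg
  set c : (C →ₗ[F] F) → Fin n := fun g =>
    if h : ∃ j : Fin n, f j = g then h.choose else 0 with hcdef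
  have hc : ∀ g ∈ t, f (c g) = g := by
    intro g hg
    have h : ∃ j : Fin n, f j = g := hchoice g hg
    simp only [hcdef, dif_pos h]
    exact h.choose_spec
  refine ⟨t.toFinset.image c, ?_, ?_⟩
  · rw [Finset.card_image_of_injOn, hcard]
    intro g1 h1 g2 h2 he
    have h1' : g1 ∈ t := Set.mem_toFinset.mp (Finset.mem_coe.mp h1)
    have h2' : g2 ∈ t := Set.mem_toFinset.mp (Finset.mem_coe.mp h2)
    rw [← hc g1 h1', ← hc g2 h2', he]
  · intro x hx hvanish
    set v : C := ⟨x, hx⟩ with hvdef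
    have hval : ∀ g ∈ t, g v = 0 := by
      intro g hg
      have : c g ∈ t.toFinset.image c :=
        Finset.mem_image_of_mem c (Set.mem_toFinset.mpr hg)
      have h0 := hvanish _ this
      rw [← hc g hg]
      exact h0
    have hker : Submodule.span F t ≤ LinearMap.ker (Module.Dual.eval F C v) := by
      rw [Submodule.span_le]
      intro g hg
      simp only [SetLike.mem_coe, LinearMap.mem_ker]
      exact hval g hg
    rw [htspan'] at hker
    have hall : ∀ j : Fin n, x j = 0 := by
      intro j
      have := hker (Submodule.mem_top (x := f j))
      simpa [hfdef, hvdef] using this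
    funext j
    exact hall j

/-- every cyclic `[n,k]` code has `n` automorphisms (the cyclic shifts)
whose values at each fixed coordinate exhaust all coordinates; hence it admits an
MDS-PIR capacity-achieving matrix `Λ_{κ,ν}` with `κ/ν = k/n`. -/
theorem cyclic_code_capacity_achieving {F : Type*} [Field F] {n k : ℕ} [NeZero n]
    (C : Submodule F (Fin n → F)) (hk : Module.finrank F C = k)
    (hcyc : ∀ x ∈ C, (fun j : Fin n => x (j + 1)) ∈ C) :
    (∃ π : Fin n → Equiv.Perm (Fin n),
      (∀ l, ∀ x : Fin n → F, x ∈ C ↔ (fun j => x (π l j)) ∈ C) ∧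
      (∀ j : Fin n, Function.Bijective fun l => π l j)) ∧
    ∃ (ν κ : ℕ) (Λ : Fin ν → Fin n → Bool), 0 < ν ∧ IsPIRMatrix C k κ Λ ∧
      κ * n = k * ν := by
  classical
  -- shifts by any constant preserve C
  open Fin.NatCast Fin.CommRing in
  have hnat : ∀ m : ℕ, ∀ x ∈ C, (fun j => x (j + (m : Fin n))) ∈ C := by
    intro m
    induction m with
    | zero => intro x hx; simpa using hx
    | succ m ih =>
      intro x hx
      have h2 := ih _ (hcyc x hx)
      have he : (fun j : Fin n => x ((j + (m : Fin n)) + 1))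
          = (fun j : Fin n => x (j + ((m + 1 : ℕ) : Fin n))) := by
        funext j; congr 1; push_cast; ring
      rwa [he] at h2
  open Fin.NatCast in
  have hshift : ∀ (c : Fin n), ∀ x ∈ C, (fun j => x (j + c)) ∈ C := by
    intro c x hx
    have := hnat c.val x hx
    simpa [Fin.cast_val_eq_self] using this
  constructor
  · refine ⟨fun l => Equiv.addRight l, ?_, ?_⟩
    · intro l x
      constructor
      · intro hx; exact hshift l x hx
      · intro hx
        have := hshift (-l) _ hx
        have he : (fun j : Fin n => x ((j + -l) + l)) = x := by
          funext j; congr 1; abel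
        simpa [he] using this
    · intro j
      exact (Equiv.addLeft j).bijective
  · -- the PIR matrix
    obtain ⟨I, hIcard, hIinfo⟩ := exists_infoSet_aux C hk
    refine ⟨n, k, fun u j => decide ((j + u) ∈ I), Nat.pos_of_ne_zero (NeZero.ne n), ⟨?_, ?_⟩, rfl⟩
    · intro j
      have : (Finset.univ.filter fun u : Fin n => decide ((j + u) ∈ I) = true)
          = Finset.univ.filter fun u : Fin n => (j + u) ∈ I := by
        simp
      rw [this, ← hIcard]
      apply Finset.card_bij (fun u _ => j + u)
      · intro u hu; exact (Finset.mem_filter.mp hu).2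
      · intro u1 h1 u2 h2 he; exact add_left_cancel he
      · intro i hi
        refine ⟨i - j, Finset.mem_filter.mpr ⟨Finset.mem_univ _, ?_⟩, ?_⟩
        · simpa using hi
        · abel
    · intro u
      refine ⟨I.image (fun i => i - u), ?_, ?_, ?_⟩
      · intro j hj
        obtain ⟨i, hi, rfl⟩ := Finset.mem_image.mp hj
        have h : i - u + u = i := by abel
        show decide ((i - u + u) ∈ I) = true
        rw [h]
        simpa using hi
      · rw [Finset.card_image_of_injective _ (sub_left_injective), hIcard]
      · intro x hx hvanish
        have hy : (fun j : Fin n => x (j + -u)) ∈ C := hshift (-u) x hx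
        have hy0 : (fun j : Fin n => x (j + -u)) = 0 := by
          apply hIinfo _ hy
          intro i hi
          apply hvanish
          rw [Finset.mem_image]
          exact ⟨i, hi, by abel⟩
        funext j
        have := congrFun hy0 (j + u)
        simpa using this
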